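/- Let G_0, G_1 be finite groups with subgroups A_0, B_0 ≤ G_0 and A_1, B_1 ≤ G_1, let ℓ = |G_1 : A_1|, W = G_0 ≀ G_1 = G_0^ℓ ⋊ G_1 (with G_1 permuting coordinates via its action on the cosets of A_1), Â = (A_0 × G_0^{ℓ−1}) ⋊ A_1 and B̂ = B_0^ℓ ⋊ B_1. Then Â·B̂ = (A_0B_0 × G_0^{ℓ−1})·(A_1B_1) as subsets of W. -/

import Mathlib

open scoped Pointwise

section Wreath

variable {G₀ G₁ : Type*} [Group G₀] [Group G₁]

/-- The automorphism of `(G₁ ⧸ A₁) → G₀` permuting coordinates by `σ`. -/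
def wreathAut (G₀ : Type*) [Group G₀] {G₁ : Type*} [Group G₁] (A₁ : Subgroup G₁)
    (σ : G₁) : MulAut ((G₁ ⧸ A₁) → G₀) where
  toFun f := fun x => f (σ⁻¹ • x)
  invFun f := fun x => f (σ • x)
  left_inv f := by funext x; simp
  right_inv f := by funext x; simp
  map_mul' f g := rfl

/-- The coordinate-permutation action of `G₁` on `(G₁ ⧸ A₁) → G₀`, as a
homomorphism into the automorphism group; this defines the wreath product
`G₀ ≀ G₁ = ((G₁ ⧸ A₁) → G₀) ⋊[wreathPhi G₀ A₁] G₁`. -/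
def wreathPhi (G₀ : Type*) [Group G₀] {G₁ : Type*} [Group G₁] (A₁ : Subgroup G₁) :
    G₁ →* MulAut ((G₁ ⧸ A₁) → G₀) where
  toFun := wreathAut G₀ A₁
  map_one' := by ext f x; simp [wreathAut]
  map_mul' σ τ := by ext f x; simp [wreathAut, mul_smul]

lemma wreath_smul_pt {A₁ : Subgroup G₁} {σ : G₁} (h : σ ∈ A₁) :
    σ • ((1 : G₁) : G₁ ⧸ A₁) = ((1 : G₁) : G₁ ⧸ A₁) := by
  rw [MulAction.Quotient.smul_mk]
  exact QuotientGroup.eq.mpr (by simpa using A₁.inv_mem h)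

/-- The subgroup `Â = (A₀ × G₀^{ℓ-1}) ⋊ A₁` of the wreath product:
top component in `A₁`, and the coordinate at the base point `A₁ ∈ G₁ ⧸ A₁`
in `A₀`. -/
def wreathAhat (A₀ : Subgroup G₀) (A₁ : Subgroup G₁) :
    Subgroup (((G₁ ⧸ A₁) → G₀) ⋊[wreathPhi G₀ A₁] G₁) where
  carrier := {w | w.right ∈ A₁ ∧ w.left ((1 : G₁) : G₁ ⧸ A₁) ∈ A₀}
  one_mem' := by
    refine ⟨A₁.one_mem, ?_⟩
    simp [SemidirectProduct.one_left]
  mul_mem' := by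
    rintro a b ⟨ha1, ha2⟩ ⟨hb1, hb2⟩
    refine ⟨A₁.mul_mem ha1 hb1, ?_⟩
    rw [SemidirectProduct.mul_left]
    have : (wreathPhi G₀ A₁ a.right) b.left ((1 : G₁) : G₁ ⧸ A₁)
        = b.left ((1 : G₁) : G₁ ⧸ A₁) := by
      show b.left (a.right⁻¹ • ((1 : G₁) : G₁ ⧸ A₁)) = _
      rw [wreath_smul_pt (A₁.inv_mem ha1)]
    rw [Pi.mul_apply, this]
    exact A₀.mul_mem ha2 hb2
  inv_mem' := by
    rintro a ⟨ha1, ha2⟩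
    refine ⟨A₁.inv_mem ha1, ?_⟩
    rw [SemidirectProduct.inv_left]
    show a.left⁻¹ (a.right⁻¹⁻¹ • ((1 : G₁) : G₁ ⧸ A₁)) ∈ A₀
    rw [inv_inv, wreath_smul_pt ha1, Pi.inv_apply]
    exact A₀.inv_mem ha2

/-- The subgroup `B̂ = B₀ ≀ B₁ = B₀^ℓ ⋊ B₁` of the wreath product. -/
def wreathBhat (B₀ : Subgroup G₀) (A₁ B₁ : Subgroup G₁) :
    Subgroup (((G₁ ⧸ A₁) → G₀) ⋊[wreathPhi G₀ A₁] G₁) where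
  carrier := {w | w.right ∈ B₁ ∧ ∀ x, w.left x ∈ B₀}
  one_mem' := ⟨B₁.one_mem, fun x => by simp [SemidirectProduct.one_left]⟩
  mul_mem' := by
    rintro a b ⟨ha1, ha2⟩ ⟨hb1, hb2⟩
    refine ⟨B₁.mul_mem ha1 hb1, fun x => ?_⟩
    rw [SemidirectProduct.mul_left, Pi.mul_apply]
    exact B₀.mul_mem (ha2 x) (hb2 _)
  inv_mem' := by
    rintro a ⟨ha1, ha2⟩
    refine ⟨B₁.inv_mem ha1, fun x => ?_⟩
    rw [SemidirectProduct.inv_left]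
    show a.left⁻¹ (a.right⁻¹⁻¹ • x) ∈ B₀
    rw [Pi.inv_apply]
    exact B₀.inv_mem (ha2 _)

end Wreath

/-- `Â·B̂ = (A₀B₀ × G₀^{ℓ−1})·(A₁B₁)`: the product set `ÂB̂` in the wreath
product `W = G₀ ≀ G₁` consists exactly of the elements whose top component
lies in `A₁B₁` and whose coordinate at the base point lies in `A₀B₀`. -/
theorem wreath_Ahat_mul_Bhat
    {G₀ G₁ : Type*} [Group G₀] [Group G₁] [Fintype G₀] [Fintype G₁]
    (A₀ B₀ : Subgroup G₀) (A₁ B₁ : Subgroup G₁) :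
    (wreathAhat A₀ A₁ : Set (((G₁ ⧸ A₁) → G₀) ⋊[wreathPhi G₀ A₁] G₁)) *
        (wreathBhat B₀ A₁ B₁ : Set (((G₁ ⧸ A₁) → G₀) ⋊[wreathPhi G₀ A₁] G₁)) =
      {w : ((G₁ ⧸ A₁) → G₀) ⋊[wreathPhi G₀ A₁] G₁ |
        w.left ((1 : G₁) : G₁ ⧸ A₁) ∈ (A₀ : Set G₀) * (B₀ : Set G₀) ∧
        w.right ∈ (A₁ : Set G₁) * (B₁ : Set G₁)} := by
  ext w
  constructor
  · rintro ⟨a, ⟨ha1, ha2⟩, b, ⟨hb1, hb2⟩, rfl⟩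
    constructor
    · rw [SemidirectProduct.mul_left, Pi.mul_apply]
      have : (wreathPhi G₀ A₁ a.right) b.left ((1 : G₁) : G₁ ⧸ A₁)
          = b.left ((1 : G₁) : G₁ ⧸ A₁) := by
        show b.left (a.right⁻¹ • ((1 : G₁) : G₁ ⧸ A₁)) = _
        rw [wreath_smul_pt (A₁.inv_mem ha1)]
      rw [this]
      exact Set.mul_mem_mul ha2 (hb2 _)
    · exact Set.mul_mem_mul ha1 hb1
  · rintro ⟨⟨a₀, ha₀, b₀, hb₀, h0⟩, ⟨a₁, ha₁, b₁, hb₁, h1⟩⟩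
    set b : ((G₁ ⧸ A₁) → G₀) ⋊[wreathPhi G₀ A₁] G₁ := ⟨fun _ => b₀, b₁⟩ with hb
    set a : ((G₁ ⧸ A₁) → G₀) ⋊[wreathPhi G₀ A₁] G₁ := w * b⁻¹ with ha
    refine ⟨a, ⟨?_, ?_⟩, b, ⟨hb₁, fun x => hb₀⟩, by rw [ha]; group⟩
    · show (w * b⁻¹).right ∈ A₁
      have : (w * b⁻¹).right = a₁ := by
        rw [SemidirectProduct.mul_right, SemidirectProduct.inv_right, ← h1]
        show a₁ * b₁ * b₁⁻¹ = a₁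
        group
      rw [this]; exact ha₁
    · show (w * b⁻¹).left ((1 : G₁) : G₁ ⧸ A₁) ∈ A₀
      rw [SemidirectProduct.mul_left, Pi.mul_apply]
      have hr : w.right * b⁻¹.right = a₁ := by
        rw [SemidirectProduct.inv_right, ← h1]; show a₁ * b₁ * b₁⁻¹ = a₁; group
      have : (wreathPhi G₀ A₁ w.right) b⁻¹.left ((1 : G₁) : G₁ ⧸ A₁) = b₀⁻¹ := by
        show b⁻¹.left (w.right⁻¹ • ((1 : G₁) : G₁ ⧸ A₁)) = b₀⁻¹
        rw [SemidirectProduct.inv_left]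
        show (b.left)⁻¹ ((b.right)⁻¹⁻¹ • (w.right⁻¹ • ((1 : G₁) : G₁ ⧸ A₁))) = b₀⁻¹
        rw [Pi.inv_apply]
      rw [this, ← h0]
      simpa using ha₀
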